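/- Let S be a Temperley–Lieb relation on {1,…,2n}; for i ∈ {1,…,2n} set ε_S(i) = +1 if i is the smaller element of its S-block and ε_S(i) = −1 otherwise. Then for every class C = {a₁ < ⋯ < a_k} of the Kreweras complement K(S): if 2n ∉ C then ε_S(a₁) = 1 and ε_S(aᵢ) = −1 for all i ≥ 2, so that ∑_{c∈C} ε_S(c) = 2 − |C|; and if 2n ∈ C then ε_S(aᵢ) = −1 for all i, so that ∑_{c∈C} ε_S(c) = −|C|. -/

import Mathlib

noncomputable section
open scoped Classical

/-- `p` encodes a Temperley–Lieb relation (a noncrossing partition into two-element blocks)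
on `Fin N`, as a fixed-point-free involution whose blocks `{i, p i}` are noncrossing. -/
def IsTL (N : ℕ) (p : Fin N → Fin N) : Prop :=
  (∀ i, p (p i) = i) ∧ (∀ i, p i ≠ i) ∧
  (∀ i j : Fin N, i < j → j < p i → p j < p i)

/-- the Kreweras complement of the Temperley–Lieb relation `p`, as an equivalence relation:
`i ~ j` iff the interval of points strictly after `min i j` and up to `max i j` is closed
under the pairing, i.e. is a union of blocks of `p`.  (This is the standard concrete
description of the coarsest partition whose interleaved union with `p` is noncrossing.) -/
def krew {N : ℕ} (p : Fin N → Fin N) (i j : Fin N) : Prop :=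
  ∀ k : Fin N, min i.val j.val < k.val → k.val ≤ max i.val j.val →
    (min i.val j.val < (p k).val ∧ (p k).val ≤ max i.val j.val)

lemma krew_refl {N : ℕ} (p : Fin N → Fin N) (i : Fin N) : krew p i i := by
  intro k h1 h2; simp only [Nat.min_self, Nat.max_self] at h1 h2; omega

/-- the class of `i` in the Kreweras complement of `p` -/
def kclass {N : ℕ} (p : Fin N → Fin N) (i : Fin N) : Finset (Fin N) :=
  Finset.univ.filter fun j => krew p i j

lemma mem_kclass_self {N : ℕ} (p : Fin N → Fin N) (i : Fin N) : i ∈ kclass p i := by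
  simp [kclass, krew_refl]

/-- cyclic successor on `Fin N` -/
def cycSucc {N : ℕ} (a : Fin N) : Fin N :=
  if h : a.val + 1 < N then ⟨a.val + 1, h⟩ else ⟨0, by have := a.isLt; omega⟩

/-- the element following `a` in its Kreweras complement class, cyclically: the smallest
element of the class that is `> a` if there is one, and the smallest element of the class
otherwise. -/
def classNext {N : ℕ} (p : Fin N → Fin N) (a : Fin N) : Fin N :=
  if h : ((kclass p a).filter fun b => a < b).Nonempty then
    ((kclass p a).filter fun b => a < b).min' h
  else (kclass p a).min' ⟨a, mem_kclass_self p a⟩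

/-- the sign `ε_S(i)`: `+1` if `i` is the smaller element of its block, `-1` otherwise -/
def epsTL {N : ℕ} (p : Fin N → Fin N) (i : Fin N) : ℤ := if i < p i then 1 else -1


section Aux
variable {N : ℕ} {p : Fin N → Fin N}

lemma krew_symm {i j : Fin N} (h : krew p i j) : krew p j i := by
  intro k h1 h2
  have := h k (by omega) (by omega)
  omega

lemma krew_trans (hpp : ∀ i, p (p i) = i) {i j k : Fin N}
    (h1 : krew p i j) (h2 : krew p j k) : krew p i k := by
  intro x hx1 hx2
  by_cases hA : min i.val j.val < x.val ∧ x.val ≤ max i.val j.val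
  · have hx := h1 x hA.1 hA.2
    by_cases hB : min i.val k.val < (p x).val ∧ (p x).val ≤ max i.val k.val
    · exact hB
    · have h3 := h2 (p x) (by omega) (by omega)
      rw [hpp] at h3
      omega
  · have hx := h2 x (by omega) (by omega)
    by_cases hB : min i.val k.val < (p x).val ∧ (p x).val ≤ max i.val k.val
    · exact hB
    · have h3 := h1 (p x) (by omega) (by omega)
      rw [hpp] at h3
      omega

lemma mem_kclass_iff {i j : Fin N} : j ∈ kclass p i ↔ krew p i j := by
  simp [kclass]

lemma krew_of_mem_mem (hpp : ∀ i, p (p i) = i) {a b c : Fin N}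
    (hb : b ∈ kclass p a) (hc : c ∈ kclass p a) : krew p b c :=
  krew_trans hpp (krew_symm (mem_kclass_iff.mp hb)) (mem_kclass_iff.mp hc)

lemma eps_of_lt (hne : ∀ i, p i ≠ i) {i j : Fin N}
    (h : krew p i j) (hij : i.val < j.val) : epsTL p j = -1 := by
  have h1 := h j (by omega) (by omega)
  have h2 : (p j).val ≠ j.val := fun e => hne j (Fin.ext e)
  unfold epsTL
  rw [if_neg (show ¬ j < p j from by rw [Fin.lt_def]; omega)]

lemma block_interval (hp : IsTL N p) {m : Fin N} (hm : (p m).val < m.val) :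
    ∀ k : Fin N, (p m).val ≤ k.val → k.val ≤ m.val →
      (p m).val ≤ (p k).val ∧ (p k).val ≤ m.val := by
  obtain ⟨hpp, hne, hnc⟩ := hp
  intro k hk1 hk2
  rcases eq_or_lt_of_le hk1 with he | h1
  · have hk : k = p m := Fin.ext he.symm
    subst hk
    simp only [hpp]
    omega
  rcases eq_or_lt_of_le hk2 with he | h2
  · have hk : k = m := Fin.ext he
    subst hk
    omega
  have hub : (p k).val < m.val := by
    have := hnc (p m) k (by rw [Fin.lt_def]; omega)
      (by rw [Fin.lt_def]; simp only [hpp]; omega)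
    rw [Fin.lt_def] at this
    simp only [hpp] at this
    omega
  have hne1 : (p k).val ≠ (p m).val := by
    intro e
    have : p k = p m := Fin.ext e
    have : k = m := by
      have := congrArg p this
      simpa only [hpp] using this
    omega
  have hlb : (p m).val ≤ (p k).val := by
    by_contra hc
    push_neg at hc
    have := hnc (p k) (p m) (by rw [Fin.lt_def]; omega)
      (by rw [Fin.lt_def]; simp only [hpp]; omega)
    rw [Fin.lt_def] at this
    simp only [hpp] at this
    omega
  exact ⟨hlb, le_of_lt hub⟩

lemma sign_last (hp : IsTL N p) {a m : Fin N}
    (hm : m ∈ kclass p a) (hl : ∃ j ∈ kclass p a, j.val = N - 1) :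
    (p m).val < m.val := by
  obtain ⟨j, hj, hjv⟩ := hl
  have h1 : (p m).val ≠ m.val := fun h => hp.2.1 m (Fin.ext h)
  have h2 := (p m).isLt
  have h3 := m.isLt
  by_contra hc
  push_neg at hc
  rcases eq_or_lt_of_le (show m.val ≤ N - 1 by omega) with he | hlt
  · omega
  · have hk := krew_of_mem_mem hp.1 hm hj (p m) (by omega) (by omega)
    simp only [hp.1] at hk
    omega

lemma sign_min (hp : IsTL N p) {a m : Fin N}
    (hm : m ∈ kclass p a) (hmin : ∀ b ∈ kclass p a, m.val ≤ b.val)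
    (hlast : ∀ j ∈ kclass p a, j.val ≠ N - 1) :
    m.val < (p m).val := by
  have h1 : (p m).val ≠ m.val := fun h => hp.2.1 m (Fin.ext h)
  have h2 := (p m).isLt
  have h3 := m.isLt
  by_contra hc
  push_neg at hc
  have hpm : (p m).val < m.val := by omega
  have hblock := block_interval hp hpm
  by_cases ht : 0 < (p m).val
  · have hk : krew p m ⟨(p m).val - 1, by omega⟩ := by
      intro k hk1 hk2
      simp only [Fin.val_mk] at hk1 hk2 ⊢
      have := hblock k (by omega) (by omega)
      omega
    have hmem : (⟨(p m).val - 1, by omega⟩ : Fin N) ∈ kclass p a := by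
      rw [mem_kclass_iff] at hm ⊢
      exact krew_trans hp.1 hm hk
    have := hmin _ hmem
    simp only [Fin.val_mk] at this
    omega
  · have hmN : m.val ≠ N - 1 := hlast m hm
    have hk : krew p m ⟨N - 1, by omega⟩ := by
      intro k hk1 hk2
      simp only [Fin.val_mk] at hk1 hk2 ⊢
      have hk3 := (p k).isLt
      constructor
      · by_contra hc2
        push_neg at hc2
        have := hblock (p k) (by omega) (by omega)
        simp only [hp.1] at this
        omega
      · omega
    have hmem : (⟨N - 1, by omega⟩ : Fin N) ∈ kclass p a := by
      rw [mem_kclass_iff] at hm ⊢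
      exact krew_trans hp.1 hm hk
    exact hlast _ hmem rfl

end Aux

/-- Let `S` be a Temperley–Lieb relation on `{1,…,2n}` (encoded 0-based
on `Fin (2n)` by the involution `p`, so the 1-based point `2n` is `⟨2n-1,_⟩`).  For every
class `C` of the Kreweras complement `K(S)`: if `2n ∉ C` then `ε_S` is `+1` on the least
element of `C` and `-1` on all the others, so `∑_{c∈C} ε_S(c) = 2 - |C|`; and if `2n ∈ C`
then `ε_S = -1` on all of `C`, so `∑_{c∈C} ε_S(c) = -|C|`. -/
theorem kreweras_eps_sum
    (n : ℕ) (p : Fin (2 * n) → Fin (2 * n)) (hp : IsTL (2 * n) p) (a : Fin (2 * n)) :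
    ((⟨2 * n - 1, by have := a.isLt; omega⟩  : Fin (2 * n)) ∉ kclass p a →
      (epsTL p ((kclass p a).min' ⟨a, mem_kclass_self p a⟩) = 1 ∧
       (∀ b ∈ kclass p a, b ≠ (kclass p a).min' ⟨a, mem_kclass_self p a⟩ → epsTL p b = -1) ∧
       ∑ c ∈ kclass p a, epsTL p c = 2 - ((kclass p a).card : ℤ))) ∧
    ((⟨2 * n - 1, by have := a.isLt; omega⟩  : Fin (2 * n)) ∈ kclass p a →
      ((∀ b ∈ kclass p a, epsTL p b = -1) ∧
       ∑ c ∈ kclass p a, epsTL p c = -((kclass p a).card : ℤ))) := by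
  have hm_mem : ((kclass p a).min' ⟨a, mem_kclass_self p a⟩) ∈ kclass p a :=
    Finset.min'_mem _ _
  set C := kclass p a with hC
  set m := C.min' ⟨a, mem_kclass_self p a⟩ with hm
  have hmin : ∀ b ∈ C, m.val ≤ b.val := fun b hb => Finset.min'_le C b hb
  have h_others : ∀ b ∈ C, b ≠ m → epsTL p b = -1 := by
    intro b hb hbm
    have h1 : m.val ≤ b.val := hmin b hb
    have h2 : m.val ≠ b.val := fun e => hbm (Fin.ext e.symm)
    exact eps_of_lt hp.2.1 (krew_of_mem_mem hp.1 hm_mem hb) (by omega)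
  constructor
  · intro hlast
    have hlast' : ∀ j ∈ C, j.val ≠ 2 * n - 1 := by
      intro j hj hjv
      have : j = (⟨2 * n - 1, by have := a.isLt; omega⟩ : Fin (2 * n)) := Fin.ext hjv
      rw [this] at hj
      exact hlast hj
    have hsign := sign_min hp hm_mem hmin hlast'
    have heps_m : epsTL p m = 1 := by
      unfold epsTL
      rw [if_pos (show m < p m from by rw [Fin.lt_def]; omega)]
    refine ⟨heps_m, h_others, ?_⟩
    rw [← Finset.add_sum_erase C (epsTL p) hm_mem, heps_m]
    have hconst : ∀ c ∈ C.erase m, epsTL p c = -1 := fun c hc =>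
      h_others c (Finset.mem_of_mem_erase hc) (Finset.ne_of_mem_erase hc)
    rw [Finset.sum_congr rfl hconst, Finset.sum_const, Finset.card_erase_of_mem hm_mem]
    have hcard : 1 ≤ C.card := Finset.card_pos.mpr ⟨m, hm_mem⟩
    rw [nsmul_eq_mul]
    push_cast [Nat.cast_sub (show 1 ≤ (kclass p a).card from hcard)]
    ring
  · intro hlast
    have hex : ∃ j ∈ C, j.val = 2 * n - 1 := ⟨_, hlast, rfl⟩
    have hsign := sign_last hp hm_mem hex
    have heps_m : epsTL p m = -1 := by
      unfold epsTL
      rw [if_neg (show ¬ m < p m from by rw [Fin.lt_def]; omega)]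
    have hall : ∀ b ∈ C, epsTL p b = -1 := by
      intro b hb
      by_cases hbm : b = m
      · rw [hbm]; exact heps_m
      · exact h_others b hb hbm
    refine ⟨hall, ?_⟩
    rw [Finset.sum_congr rfl hall, Finset.sum_const, nsmul_eq_mul]
    ring
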